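/- For all n ≥ 1 and k ≥ 1, the Catalan convolution satisfies C_{n,k} = sum over all nonnegative integer k-tuples (a_1,...,a_k) with a_1+...+a_k = n-k of the product C_{a_1} · C_{a_2} · ... · C_{a_k}, where C_m denotes the m-th Catalan number. -/

import Mathlib

/-- The Catalan convolution `C_{n,k} = (k/(2n-k)) · binomial(2n-k, n)`. -/
def catalanConv (n k : ℕ) : ℚ := (k : ℚ) / ((2 * n - k : ℕ) : ℚ) * ((2 * n - k).choose n : ℚ)

/-- The generating function of the Catalan numbers. -/
noncomputable def catGF : PowerSeries ℚ := PowerSeries.mk fun n => (catalan n : ℚ)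

lemma catGF_eq : catGF = 1 + PowerSeries.X * catGF ^ 2 := by
  ext n
  cases n with
  | zero => simp [catGF]
  | succ n =>
    rw [map_add, PowerSeries.coeff_succ_X_mul, PowerSeries.coeff_one]
    simp only [catGF, sq, PowerSeries.coeff_mul, PowerSeries.coeff_mk, if_neg (Nat.succ_ne_zero n)]
    rw [zero_add, catalan_succ']
    push_cast
    rfl

/-- Ballot-number formula for the coefficients of powers of the Catalan GF. -/
def g (k m : ℕ) : ℚ := (k : ℚ) / ((2 * m + k : ℕ) : ℚ) * ((2 * m + k).choose m : ℚ)

lemma g_zero (m : ℕ) : g 0 m = 0 := by simp [g]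

lemma g_step (k m : ℕ) : g (k + 1) (m + 1) = g k (m + 1) + g (k + 2) m := by
  have hP : ((2*m+k+3).choose (m+1) : ℚ)
      = ((2*m+k+2).choose m : ℚ) + ((2*m+k+2).choose (m+1) : ℚ) := by
    rw [Nat.choose_succ_succ (2*m+k+2) m]; push_cast; ring
  have hS : ((2*m+k+3 : ℕ) : ℚ) * ((2*m+k+2).choose m : ℚ)
      = ((2*m+k+3).choose (m+1) : ℚ) * ((m+1 : ℕ) : ℚ) := by
    exact_mod_cast congrArg (Nat.cast : ℕ → ℚ) (Nat.add_one_mul_choose_eq (2*m+k+2) m)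
  have h1 : (2 * (m+1) + (k+1)) = 2*m+k+3 := by ring
  have h2 : (2 * (m+1) + k) = 2*m+k+2 := by ring
  have h3 : (2 * m + (k+2)) = 2*m+k+2 := by ring
  simp only [g, h1, h2, h3]
  have d1 : ((2*m+k+3 : ℕ) : ℚ) ≠ 0 := by positivity
  have d2 : ((2*m+k+2 : ℕ) : ℚ) ≠ 0 := by positivity
  rw [div_mul_eq_mul_div, div_mul_eq_mul_div, div_mul_eq_mul_div, div_add_div _ _ d2 d2,
    div_eq_div_iff d1 (by positivity)]
  push_cast at hP hS ⊢
  linear_combination (↑k * (2*(m:ℚ)+k+3) * (2*(m:ℚ)+k+2)) * hP - (2 * (2*(m:ℚ)+k+2)) * hS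

lemma catGF_pow_succ (k : ℕ) :
    catGF ^ (k + 1) = catGF ^ k + PowerSeries.X * catGF ^ (k + 2) := by
  calc catGF ^ (k+1) = catGF ^ k * catGF := pow_succ _ _
    _ = catGF ^ k * (1 + PowerSeries.X * catGF ^ 2) := by rw [← catGF_eq]
    _ = catGF ^ k + PowerSeries.X * catGF ^ (k + 2) := by ring

lemma coeff_catGF_pow : ∀ m k : ℕ, PowerSeries.coeff m (catGF ^ (k + 1)) = g (k + 1) m := by
  intro m
  induction m using Nat.strong_induction_on with
  | _ m ihm =>
    cases m with
    | zero =>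
      intro k
      rw [PowerSeries.coeff_zero_eq_constantCoeff, map_pow]
      have : PowerSeries.constantCoeff catGF = 1 := by simp [catGF]
      rw [this, one_pow]
      simp [g, Nat.cast_add]
      rw [div_self (by positivity)]
    | succ m =>
      intro k
      induction k with
      | zero =>
        rw [catGF_pow_succ, map_add, PowerSeries.coeff_succ_X_mul, pow_zero,
          PowerSeries.coeff_one, if_neg (Nat.succ_ne_zero m), zero_add,
          ihm m (Nat.lt_succ_self m) 1]
        rw [g_step 0 m, g_zero, zero_add]
      | succ k ihk =>
        rw [catGF_pow_succ, map_add, PowerSeries.coeff_succ_X_mul, ihk,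
          ihm m (Nat.lt_succ_self m) (k + 2)]
        exact (g_step (k + 1) m).symm

lemma sum_antidiagonalTuple_succ {M : Type*} [AddCommMonoid M] (k n : ℕ)
    (f : (Fin (k + 1) → ℕ) → M) :
    ∑ t ∈ Finset.Nat.antidiagonalTuple (k + 1) n, f t
      = ∑ p ∈ Finset.HasAntidiagonal.antidiagonal n, ∑ t ∈ Finset.Nat.antidiagonalTuple k p.2,
          f (Fin.cons p.1 t) := by
  rw [show (∑ p ∈ Finset.HasAntidiagonal.antidiagonal n, ∑ t ∈ Finset.Nat.antidiagonalTuple k p.2,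
        f (Fin.cons p.1 t))
      = ∑ x ∈ (Finset.HasAntidiagonal.antidiagonal n).sigma (fun p => Finset.Nat.antidiagonalTuple k p.2),
          f (Fin.cons x.1.1 x.2) from (Finset.sum_sigma (Finset.HasAntidiagonal.antidiagonal n)
            (fun p => Finset.Nat.antidiagonalTuple k p.2)
            (fun x => f (Fin.cons x.1.1 x.2))).symm]
  refine Finset.sum_nbij' (i := fun t => ⟨(t 0, ∑ i : Fin k, t i.succ), Fin.tail t⟩)
    (j := fun x => Fin.cons x.1.1 x.2) ?_ ?_ ?_ ?_ ?_
  · intro t ht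
    rw [Finset.Nat.mem_antidiagonalTuple] at ht
    simp only [Finset.mem_sigma, Finset.HasAntidiagonal.mem_antidiagonal, Finset.Nat.mem_antidiagonalTuple]
    constructor
    · rw [← ht, Fin.sum_univ_succ]
    · rfl
  · intro x hx
    rw [Finset.mem_sigma, Finset.HasAntidiagonal.mem_antidiagonal] at hx
    rw [Finset.Nat.mem_antidiagonalTuple] at hx ⊢
    simp only [Fin.sum_univ_succ, Fin.cons_zero, Fin.cons_succ]
    rw [hx.2, hx.1]
  · intro t ht
    exact Fin.cons_self_tail t
  · intro x hx
    rw [Finset.mem_sigma, Finset.HasAntidiagonal.mem_antidiagonal] at hx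
    have h2 := Finset.Nat.mem_antidiagonalTuple.mp hx.2
    refine Sigma.ext ?_ ?_
    · simp only [Fin.cons_zero, Fin.cons_succ]
      exact Prod.ext rfl h2
    · simp [Fin.tail_cons]
  · intro t ht
    rw [Fin.cons_self_tail]

lemma sum_tuple_eq_coeff (k m : ℕ) :
    ∑ t ∈ Finset.Nat.antidiagonalTuple k m, ∏ i : Fin k, (catalan (t i) : ℚ)
      = PowerSeries.coeff m (catGF ^ k) := by
  induction k generalizing m with
  | zero =>
    cases m with
    | zero => simp
    | succ m => simp [PowerSeries.coeff_one, Nat.succ_ne_zero]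
  | succ k ih =>
    rw [sum_antidiagonalTuple_succ, pow_succ', PowerSeries.coeff_mul]
    refine Finset.sum_congr rfl fun p hp => ?_
    rw [← ih p.2]
    rw [Finset.mul_sum]
    refine Finset.sum_congr rfl fun t ht => ?_
    rw [Fin.prod_univ_succ]
    simp [catGF, Fin.cons_zero, Fin.cons_succ]

theorem catalanConv_eq_sum_products (n k : ℕ) (hn : 1 ≤ n) (hk : 1 ≤ k) (hkn : k ≤ n) :
    catalanConv n k =
      ∑ t ∈ Finset.Nat.antidiagonalTuple k (n - k), ∏ i : Fin k, (catalan (t i) : ℚ) := by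
  obtain ⟨k, rfl⟩ : ∃ k', k = k' + 1 := ⟨k - 1, by omega⟩
  rw [sum_tuple_eq_coeff, coeff_catGF_pow]
  unfold catalanConv g
  have h1 : 2 * (n - (k + 1)) + (k + 1) = 2 * n - (k + 1) := by omega
  rw [h1]
  congr 1
  rw [← Nat.choose_symm (by omega : n ≤ 2 * n - (k + 1))]
  have h2 : 2 * n - (k + 1) - n = n - (k + 1) := by omega
  rw [h2]
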